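/- For the Krein–von Neumann extension h of the radial operator −d²/dr² + ((4κ + (n−1)(n−3))/4) r⁻² on (0,R) (with κ = ℓ(ℓ+n−2), ℓ ∈ ℕ, n ≥ 2), the boundary condition at r = R is f'(R) − (ℓ + (n−1)/2) R⁻¹ f(R) = 0; equivalently, the unique L²-solution of hψ = 0 is ψ(r) = r^{ℓ + (n−1)/2}, and for u in dom(h) written as u = f + c·ψ with f in the minimal domain (f(R) = f'(R) = 0), one has u'(R)/u(R) = (ℓ + (n−1)/2)/R whenever u(R) ≠ 0. -/

import Mathlib

/-- For the Krein–von Neumann extension of the radial operator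
`−d²/dr² + ((4κ + (n−1)(n−3))/4) r⁻²` on `(0, R)` (with `κ = ℓ(ℓ+n−2)`, `ℓ ≥ 1`,
`n ≥ 2`), the kernel of the adjoint is spanned by `ψ(r) = r^{ℓ + (n−1)/2}` (the unique
`L²`-admissible solution): with `α := ℓ + (n−1)/2`, the function `r ↦ r^α` solves
`−ψ'' + ((4κ + (n−1)(n−3))/4) r⁻² ψ = 0` on `(0,R)` and lies in `L²((0,R))`; and for any
`u = f + c·ψ` in the Krein domain, with `f` in the minimal domain
(`f(R) = f'(R) = 0`), one has the boundary condition
`u'(R)/u(R) = (ℓ + (n−1)/2)/R` whenever `u(R) ≠ 0` — equivalently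
`f'(R) − (ℓ + (n−1)/2) R⁻¹ f(R) = 0`. -/
theorem stmt_14 (n ℓ : ℕ) (hn : 2 ≤ n) (hℓ : 1 ≤ ℓ) (R : ℝ) (hR : 0 < R) :
    -- `ψ(r) = r^α` solves the homogeneous equation on `(0,R)` …
    (∀ r ∈ Set.Ioo (0 : ℝ) R,
      HasDerivAt (fun s : ℝ => s ^ ((ℓ : ℝ) + ((n : ℝ) - 1) / 2))
        (((ℓ : ℝ) + ((n : ℝ) - 1) / 2) * r ^ ((ℓ : ℝ) + ((n : ℝ) - 1) / 2 - 1)) r ∧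
      HasDerivAt
        (fun s : ℝ => ((ℓ : ℝ) + ((n : ℝ) - 1) / 2) * s ^ ((ℓ : ℝ) + ((n : ℝ) - 1) / 2 - 1))
        (((ℓ : ℝ) + ((n : ℝ) - 1) / 2) * (((ℓ : ℝ) + ((n : ℝ) - 1) / 2 - 1) *
          r ^ ((ℓ : ℝ) + ((n : ℝ) - 1) / 2 - 2))) r ∧
      -(((ℓ : ℝ) + ((n : ℝ) - 1) / 2) * (((ℓ : ℝ) + ((n : ℝ) - 1) / 2 - 1) *
          r ^ ((ℓ : ℝ) + ((n : ℝ) - 1) / 2 - 2))) +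
        ((4 * ((ℓ : ℝ) * ((ℓ : ℝ) + (n : ℝ) - 2)) + ((n : ℝ) - 1) * ((n : ℝ) - 3)) / 4) /
          r ^ 2 * r ^ ((ℓ : ℝ) + ((n : ℝ) - 1) / 2) = 0) ∧
    -- … and is in `L²((0,R); dr)`:
    MeasureTheory.MemLp (fun s : ℝ => s ^ ((ℓ : ℝ) + ((n : ℝ) - 1) / 2)) 2
      (MeasureTheory.volume.restrict (Set.Ioo (0 : ℝ) R)) ∧
    -- boundary condition at `r = R` for `u = f + c·ψ` with `f(R) = f'(R) = 0`:
    (∀ (f u : ℝ → ℝ) (c : ℝ),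
      (∀ r : ℝ, u r = f r + c * r ^ ((ℓ : ℝ) + ((n : ℝ) - 1) / 2)) →
      f R = 0 → HasDerivAt f 0 R → u R ≠ 0 →
      deriv u R / u R = ((ℓ : ℝ) + ((n : ℝ) - 1) / 2) / R) := by
  set α : ℝ := (ℓ : ℝ) + ((n : ℝ) - 1) / 2 with hα
  have hα1 : (1 : ℝ) ≤ α := by
    have h1 : (1 : ℝ) ≤ (ℓ : ℝ) := by exact_mod_cast hℓ
    have h2 : (2 : ℝ) ≤ (n : ℝ) := by exact_mod_cast hn
    simp only [hα]; nlinarith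
  refine ⟨?_, ?_, ?_⟩
  · intro r hr
    have hr0 : (0 : ℝ) < r := hr.1
    have hd1 : HasDerivAt (fun s : ℝ => s ^ α) (α * r ^ (α - 1)) r :=
      Real.hasDerivAt_rpow_const (Or.inl hr0.ne')
    refine ⟨hd1, ?_, ?_⟩
    · have hd2 : HasDerivAt (fun s : ℝ => s ^ (α - 1)) ((α - 1) * r ^ (α - 1 - 1)) r :=
        Real.hasDerivAt_rpow_const (Or.inl hr0.ne')
      have := hd2.const_mul α
      have he : α - 1 - 1 = α - 2 := by ring
      rw [he] at this
      exact this
    · have hsplit : r ^ α = r ^ (α - 2) * r ^ 2 := by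
        rw [← Real.rpow_two, ← Real.rpow_add hr0]; ring_nf
      have hC : (4 * ((ℓ : ℝ) * ((ℓ : ℝ) + (n : ℝ) - 2)) + ((n : ℝ) - 1) * ((n : ℝ) - 3)) / 4
          = α * (α - 1) := by
        simp only [hα]; ring
      rw [hsplit, hC]
      field_simp
      ring
  · haveI : MeasureTheory.IsFiniteMeasure
        (MeasureTheory.volume.restrict (Set.Ioo (0 : ℝ) R)) := by
      constructor
      rw [MeasureTheory.Measure.restrict_apply MeasurableSet.univ, Set.univ_inter,
        Real.volume_Ioo]
      exact ENNReal.ofReal_lt_top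
    refine MeasureTheory.MemLp.of_bound ?_ (R ^ α ⊔ 1) ?_
    · exact (Real.continuous_rpow_const (by linarith)).aestronglyMeasurable
    · refine (MeasureTheory.ae_restrict_iff' measurableSet_Ioo).2 ?_
      filter_upwards with x hx
      have hx0 : 0 ≤ x := hx.1.le
      rw [Real.norm_eq_abs, abs_of_nonneg (Real.rpow_nonneg hx0 α)]
      exact le_sup_of_le_left
        (Real.rpow_le_rpow hx0 hx.2.le (by linarith))
  · intro f u c hu hfR hf' huR
    have hueq : u = fun r => f r + c * r ^ α := funext hu
    have hdψ : HasDerivAt (fun s : ℝ => s ^ α) (α * R ^ (α - 1)) R :=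
      Real.hasDerivAt_rpow_const (Or.inl hR.ne')
    have hdu : HasDerivAt u (0 + c * (α * R ^ (α - 1))) R := by
      rw [hueq]; exact hf'.add (hdψ.const_mul c)
    have hderu : deriv u R = c * (α * R ^ (α - 1)) := by
      rw [hdu.deriv]; ring
    have huRval : u R = c * R ^ α := by rw [hu R, hfR, zero_add]
    have hRα : (0 : ℝ) < R ^ α := Real.rpow_pos_of_pos hR α
    have hc : c ≠ 0 := by
      intro h; apply huR; rw [huRval, h, zero_mul]
    have hsub : R ^ (α - 1) = R ^ α / R := by
      rw [Real.rpow_sub hR, Real.rpow_one]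
    rw [hderu, huRval, hsub]
    field_simp
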